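/- arXiv:1805.01622 — 2 statements merged into one kernel-verified Lean document; each statement's English description precedes it below -/
import Mathlib

section
/- Let Φ : Δ₀ → ℚ be an additive, Γ₀(N)-invariant map and fix x₀ ∈ ℙ¹(ℚ). Then the homomorphism γ ↦ Φ([γ⁻¹·x₀] − [x₀]) is identically zero on Γ₀(N) if and only if Φ extends to an additive, Γ₀(N)-invariant map Δ → ℚ (i.e., there exists an additive Ψ : Δ → ℚ with Ψ(γ·d) = Ψ(d) for all γ ∈ Γ₀(N), d ∈ Δ, whose restriction to Δ₀ is Φ). -/
/-! Setup: `Γ₀(N) ≤ SL(2, ℤ)` acts on `ℙ¹(ℚ)`; `Δ = ℤ[ℙ¹(ℚ)]`, `Δ₀` the degree-zero divisors. -/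

noncomputable section

/-- The projective line over `ℚ`, i.e. the projectivization of `ℚ²`. -/
abbrev P1 : Type := Projectivization ℚ (Fin 2 → ℚ)

/-- The action of `SL(2, ℤ)` on `ℙ¹(ℚ)`, via the linear action of `SL(2, ℚ)` on `ℚ²`. -/
def smulP1 (g : Matrix.SpecialLinearGroup (Fin 2) ℤ) (x : P1) : P1 :=
  Projectivization.map
    ((Matrix.SpecialLinearGroup.toLin'
        (Matrix.SpecialLinearGroup.map (Int.castRingHom ℚ) g)) : (Fin 2 → ℚ) →ₗ[ℚ] (Fin 2 → ℚ))
    (LinearEquiv.injective _) x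

/-- The degree of a divisor on `ℙ¹(ℚ)`: the sum of its coefficients. -/
def degMap : (P1 →₀ ℤ) →+ ℤ := Finsupp.liftAddHom fun _ => AddMonoidHom.id ℤ

/-- `Δ₀`: the subgroup of divisors of degree `0`. -/
def Delta0 : AddSubgroup (P1 →₀ ℤ) := degMap.ker

lemma degMap_mapDomain (f : P1 → P1) (d : P1 →₀ ℤ) :
    degMap (Finsupp.mapDomain f d) = degMap d := by
  classical
  simp only [degMap, Finsupp.liftAddHom_apply]
  exact Finsupp.sum_mapDomain_index_addMonoidHom (h := fun _ => AddMonoidHom.id ℤ)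

/-- The action of `SL(2, ℤ)` on degree-zero divisors on `ℙ¹(ℚ)`. -/
def smulDelta0 (g : Matrix.SpecialLinearGroup (Fin 2) ℤ) (d : ↥Delta0) : ↥Delta0 :=
  ⟨Finsupp.mapDomain (smulP1 g) d.1, by
    have hd := d.2
    simp only [Delta0, AddMonoidHom.mem_ker] at hd ⊢
    rw [degMap_mapDomain]
    exact hd⟩

/-- The degree-zero divisor `[a] - [b]`. -/
def divOf (a b : P1) : ↥Delta0 :=
  ⟨Finsupp.single a 1 - Finsupp.single b 1, by
    simp only [Delta0, AddMonoidHom.mem_ker]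
    rw [map_sub]
    simp [degMap, Finsupp.liftAddHom_apply_single]⟩

lemma smulP1_one (x : P1) : smulP1 1 x = x := by
  simp only [smulP1, map_one]
  exact congrFun (Projectivization.map_id (K := ℚ) (V := Fin 2 → ℚ)) x

lemma smulP1_mul (g h : Matrix.SpecialLinearGroup (Fin 2) ℤ) (x : P1) :
    smulP1 (g * h) x = smulP1 g (smulP1 h x) := by
  simp only [smulP1, map_mul]
  exact congrFun (Projectivization.map_comp _ (LinearEquiv.injective _) _ (LinearEquiv.injective _)) x

lemma degMap_single (x : P1) (n : ℤ) : degMap (Finsupp.single x n) = n := by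
  simp [degMap]

/-- The retraction `Δ → Δ₀`, `d ↦ d - deg d • [x₀]`. -/
def retr (x₀ : P1) : (P1 →₀ ℤ) →+ ↥Delta0 where
  toFun d := ⟨d - degMap d • Finsupp.single x₀ 1, by
    simp only [Delta0, AddMonoidHom.mem_ker, map_sub, map_zsmul, degMap_single, smul_eq_mul,
      mul_one, sub_self]⟩
  map_zero' := by ext; simp
  map_add' a b := by
    ext z
    simp only [AddSubgroup.coe_add, Finsupp.coe_add, Finsupp.coe_sub, map_add, Pi.add_apply,
      Pi.sub_apply, add_smul, Finsupp.coe_smul, Pi.smul_apply]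
    ring

/-- the homomorphism `γ ↦ Φ([γ⁻¹·x₀] - [x₀])` vanishes identically on `Γ₀(N)`
if and only if `Φ` extends to an additive, `Γ₀(N)`-invariant map `Δ → ℚ`. -/
theorem modularSymbol_cocycle_zero_iff_extends (N : ℕ) (hN : 0 < N) (Φ : ↥Delta0 →+ ℚ)
    (hΦ : ∀ γ ∈ CongruenceSubgroup.Gamma0 N, ∀ d : ↥Delta0, Φ (smulDelta0 γ d) = Φ d)
    (x₀ : P1) :
    (∀ γ ∈ CongruenceSubgroup.Gamma0 N, Φ (divOf (smulP1 γ⁻¹ x₀) x₀) = 0) ↔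
      ∃ Ψ : (P1 →₀ ℤ) →+ ℚ,
        (∀ γ ∈ CongruenceSubgroup.Gamma0 N, ∀ d : P1 →₀ ℤ,
          Ψ (Finsupp.mapDomain (smulP1 γ) d) = Ψ d) ∧
        (∀ d : ↥Delta0, Ψ d.1 = Φ d) := by
  constructor
  · intro h
    refine ⟨Φ.comp (retr x₀), ?_, ?_⟩
    · intro γ hγ d
      simp only [AddMonoidHom.comp_apply]
      have hdeg : degMap (Finsupp.mapDomain (smulP1 γ) d) = degMap d := degMap_mapDomain _ d
      -- retr x₀ (γ • d) = smulDelta0 γ (retr x₀ d) + degMap d • divOf (smulP1 γ x₀) x₀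
      have key : retr x₀ (Finsupp.mapDomain (smulP1 γ) d)
          = smulDelta0 γ (retr x₀ d) + degMap d • divOf (smulP1 γ x₀) x₀ := by
        apply Subtype.ext
        show Finsupp.mapDomain (smulP1 γ) d - degMap (Finsupp.mapDomain (smulP1 γ) d) • Finsupp.single x₀ 1
          = Finsupp.mapDomain (smulP1 γ) (d - degMap d • Finsupp.single x₀ 1)
            + degMap d • (Finsupp.single (smulP1 γ x₀) 1 - Finsupp.single x₀ 1)
        have hsub : Finsupp.mapDomain (smulP1 γ) (d - degMap d • Finsupp.single x₀ 1)
            = Finsupp.mapDomain (smulP1 γ) d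
              - degMap d • Finsupp.single (smulP1 γ x₀) 1 := by
          rw [show Finsupp.mapDomain (smulP1 γ) (d - degMap d • Finsupp.single x₀ 1)
              = Finsupp.mapDomain.addMonoidHom (smulP1 γ) (d - degMap d • Finsupp.single x₀ 1)
              from rfl, map_sub, map_zsmul]
          simp [Finsupp.mapDomain.addMonoidHom_apply, Finsupp.mapDomain_single]
        rw [hdeg, hsub, smul_sub]
        abel
      rw [key, map_add, map_zsmul, hΦ γ hγ]
      have h0 : Φ (divOf (smulP1 γ x₀) x₀) = 0 := by
        have := h γ⁻¹ (inv_mem hγ)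
        rwa [inv_inv] at this
      rw [h0, smul_zero, add_zero]
    · intro d
      have hd : degMap d.1 = 0 := d.2
      simp only [AddMonoidHom.comp_apply]
      congr 1
      apply Subtype.ext
      show d.1 - degMap d.1 • Finsupp.single x₀ 1 = d.1
      rw [hd, zero_smul, sub_zero]
  · rintro ⟨Ψ, hinv, hrestr⟩ γ hγ
    rw [← hrestr]
    show Ψ (Finsupp.single (smulP1 γ⁻¹ x₀) 1 - Finsupp.single x₀ 1) = 0
    rw [map_sub]
    have : Ψ (Finsupp.single (smulP1 γ⁻¹ x₀) 1) = Ψ (Finsupp.single x₀ 1) := by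
      have := hinv γ hγ (Finsupp.single (smulP1 γ⁻¹ x₀) 1)
      rw [Finsupp.mapDomain_single, ← smulP1_mul, mul_inv_cancel, smulP1_one] at this
      exact this.symm
    rw [this, sub_self]


end
end

section
/- Let Λ ⊂ ℂ be a discrete subgroup spanning ℂ over ℝ that is stable under complex conjugation, let Ω⁺ > 0 be the positive real generator of Λ ∩ ℝ and Ω⁻ the purely imaginary generator of Λ ∩ iℝ with Im(Ω⁻) > 0. Then Ω⁺ · Im(Ω⁻) = t · covol(Λ), where t ∈ {1,2} is the index of ℤΩ⁺ + ℤΩ⁻ in Λ and covol(Λ) is the covolume of Λ with respect to the Lebesgue measure on ℂ ≅ ℝ² (the area of a fundamental parallelogram of Λ). -/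
open MeasureTheory

open Module Submodule in
theorem index_eq_natAbs_det {M : Type*} [AddCommGroup M]
    {ι : Type*} [Fintype ι] [DecidableEq ι]
    (b : Basis ι ℤ M) (N : Submodule ℤ M)
    (bN : Basis ι ℤ N) :
    N.toAddSubgroup.index = (b.det (fun i => (bN i : M))).natAbs := by
  obtain ⟨n, snf⟩ := N.smithNormalForm b
  have hn : n = Fintype.card ι := by
    have e := bN.indexEquiv snf.bN
    simpa [Fintype.card_fin] using (Fintype.card_congr e).symm
  have hidx : N.toAddSubgroup.index = ∏ i : Fin n, (snf.a i).natAbs := by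
    rw [snf.toAddSubgroup_index_eq_ite, if_pos hn]
    simp [Ideal.span_singleton_toAddSubgroup_eq_zmultiples, Int.index_zmultiples]
  have hbij : Function.Bijective snf.f :=
    (Fintype.bijective_iff_injective_and_card snf.f).mpr ⟨snf.f.injective, by simp [hn]⟩
  let e : Fin n ≃ ι := Equiv.ofBijective snf.f hbij
  let bN2 := snf.bN.reindex e
  have hbN2 : ∀ i : ι, (bN2 i : M) = snf.a (e.symm i) • snf.bM i := by
    intro i
    simp only [bN2, Basis.reindex_apply]
    rw [snf.snf]
    congr 1
    exact congrArg snf.bM (e.apply_symm_apply i)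
  have hA : b.toMatrix (fun i => (bN2 i : M)) =
      b.toMatrix ⇑snf.bM * Matrix.diagonal (fun i => snf.a (e.symm i)) := by
    ext i j
    rw [Matrix.mul_apply]
    simp only [Basis.toMatrix_apply, hbN2, _root_.map_smul, Finsupp.smul_apply]
    rw [Finset.sum_eq_single j (by intro k _ hk; simp [Matrix.diagonal_apply_ne _ hk])
      (by simp)]
    simp [Matrix.diagonal_apply_eq, mul_comm]
  have hC : b.toMatrix (fun i => (bN i : M)) =
      b.toMatrix (fun i => (bN2 i : M)) * bN2.toMatrix ⇑bN := by
    ext i j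
    rw [Matrix.mul_apply]
    have : (bN j : M) = ∑ k, bN2.repr (bN j) k • (bN2 k : M) := by
      conv_lhs => rw [← bN2.sum_repr (bN j)]
      push_cast
      rfl
    simp only [Basis.toMatrix_apply]
    rw [this, map_sum]
    simp [Finsupp.smul_apply, Basis.toMatrix_apply, mul_comm]
  have hdet : (b.det (fun i => (bN i : M))).natAbs = ∏ i : Fin n, (snf.a i).natAbs := by
    rw [Basis.det_apply, hC, hA, Matrix.det_mul, Matrix.det_mul, Matrix.det_diagonal]
    have h1 : IsUnit (b.toMatrix ⇑snf.bM).det := by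
      rw [← Basis.det_apply]; exact b.isUnit_det snf.bM
    have h2 : IsUnit (bN2.toMatrix ⇑bN).det := by
      rw [← Basis.det_apply]; exact bN2.isUnit_det bN
    rw [Int.natAbs_mul, Int.natAbs_mul,
      Int.isUnit_iff_natAbs_eq.mp h1, Int.isUnit_iff_natAbs_eq.mp h2,
      one_mul, mul_one]
    have hprod : (∏ i : ι, snf.a (e.symm i)).natAbs = ∏ i : ι, (snf.a (e.symm i)).natAbs := by
      exact map_prod Int.natAbsHom (fun i => snf.a (e.symm i)) Finset.univ
    rw [hprod]
    exact Equiv.prod_comp e.symm (fun i => (snf.a i).natAbs)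
  rw [hidx, hdet]

open Module Submodule in
lemma vol_fd_oneI : volume (ZSpan.fundamentalDomain Complex.basisOneI) = 1 := by
  have h : ZSpan.fundamentalDomain Complex.basisOneI =
      Complex.measurableEquivRealProd ⁻¹' (Set.Ico (0:ℝ) 1 ×ˢ Set.Ico (0:ℝ) 1) := by
    ext z
    simp only [ZSpan.fundamentalDomain, Set.mem_setOf_eq, Fin.forall_fin_two,
      Complex.coe_basisOneI_repr, Set.mem_preimage, Set.mem_prod]
    rfl
  rw [h, Complex.volume_preserving_equiv_real_prod.measure_preimage
    ((measurableSet_Ico.prod measurableSet_Ico).nullMeasurableSet)]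
  rw [show ((volume : Measure (ℝ × ℝ))) = (volume : Measure ℝ).prod volume from rfl,
    Measure.prod_prod, Real.volume_Ico]
  simp

/-- for a discrete, conjugation-stable lattice `Λ ⊂ ℂ` spanning `ℂ` over `ℝ`,
with `Ω⁺` the positive real generator of `Λ ∩ ℝ` and `Ω⁻` the purely imaginary generator of
`Λ ∩ iℝ` with positive imaginary part, one has `Ω⁺ · Im(Ω⁻) = t · covol(Λ)`, where
`t ∈ {1, 2}` is the index of `ℤΩ⁺ + ℤΩ⁻` in `Λ` and `covol(Λ)` is the covolume of `Λ` for
the Lebesgue measure on `ℂ`. -/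
theorem omega_mul_omega_eq_index_mul_covolume
    (Λ : Submodule ℤ ℂ) [DiscreteTopology ↥Λ] [IsZLattice ℝ Λ]
    (hconj : ∀ z ∈ Λ, (starRingEnd ℂ) z ∈ Λ)
    (Ωp : ℝ) (hΩp : 0 < Ωp)
    (hp : ∀ z : ℂ, (z ∈ Λ ∧ z.im = 0) ↔ ∃ n : ℤ, z = (n : ℂ) * (Ωp : ℂ))
    (Ωm : ℂ) (hre : Ωm.re = 0) (him : 0 < Ωm.im)
    (hm : ∀ z : ℂ, (z ∈ Λ ∧ z.re = 0) ↔ ∃ n : ℤ, z = (n : ℂ) * Ωm)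
    (t : ℕ)
    (ht : (AddSubgroup.closure {(Ωp : ℂ), Ωm}).relIndex Λ.toAddSubgroup = t)
    (ht12 : t = 1 ∨ t = 2) :
    Ωp * Ωm.im = t * ZLattice.covolume Λ volume := by
  classical
  have hpΛ : (Ωp:ℂ) ∈ Λ := ((hp Ωp).mpr ⟨1, by push_cast; ring⟩).1
  have hmΛ : Ωm ∈ Λ := ((hm Ωm).mpr ⟨1, by push_cast; ring⟩).1
  set v : Fin 2 → ℂ := ![(Ωp : ℂ), Ωm] with hv
  have hΩm0 : Ωm ≠ 0 := by
    intro h; rw [h] at him; simp at him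
  have hliR : LinearIndependent ℝ v := by
    rw [hv, linearIndependent_fin2]
    refine ⟨by simpa using hΩm0, fun a h => ?_⟩
    have := congrArg Complex.re h
    simp [Complex.real_smul, hre] at this
    exact absurd this.symm (ne_of_gt hΩp)
  have hspanR : ⊤ ≤ Submodule.span ℝ (Set.range v) := by
    intro z _
    have hz : z = (z.re / Ωp) • (Ωp:ℂ) + (z.im / Ωm.im) • Ωm := by
      apply Complex.ext <;>
        simp [Complex.real_smul, hre] <;>
        field_simp
    rw [hz]
    exact add_mem (Submodule.smul_mem _ _ (Submodule.subset_span ⟨0, rfl⟩))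
      (Submodule.smul_mem _ _ (Submodule.subset_span ⟨1, rfl⟩))
  let bv : Module.Basis (Fin 2) ℝ ℂ := Module.Basis.mk hliR hspanR
  haveI hD : DiscreteTopology ↥(Submodule.span ℤ (Set.range ⇑bv)) := inferInstance
  haveI hZ : IsZLattice ℝ (Submodule.span ℤ (Set.range ⇑bv)) := inferInstance
  have hbv : ⇑bv = v := Module.Basis.coe_mk _ _
  have hinj : Function.Injective fun (r : ℤ) => r • (1 : ℝ) := by
    intro x y h; simpa using h
  have hliZ : LinearIndependent ℤ ⇑bv := by
    rw [hbv]; exact hliR.restrict_scalars hinj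
  let bspan : Module.Basis (Fin 2) ℤ (Submodule.span ℤ (Set.range ⇑bv)) := Module.Basis.span hliZ
  have hbspan : ∀ i, (bspan i : ℂ) = v i := by
    intro i
    rw [show (bspan i : ℂ) = ⇑bv i from congrArg Subtype.val (Module.Basis.span_apply hliZ i), hbv]
  have hle : Submodule.span ℤ (Set.range ⇑bv) ≤ Λ := by
    rw [Submodule.span_le, hbv]
    rintro x ⟨i, rfl⟩
    fin_cases i
    · exact hpΛ
    · exact hmΛ
  -- the index is t
  let N : Submodule ℤ ↥Λ := (Submodule.span ℤ (Set.range ⇑bv)).comap Λ.subtype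
  have hNidx : N.toAddSubgroup.index = t := by
    rw [← ht]
    have h1 : AddSubgroup.closure {(Ωp:ℂ), Ωm} =
        (Submodule.span ℤ (Set.range ⇑bv)).toAddSubgroup := by
      rw [← Submodule.span_int_eq_addSubgroupClosure]
      congr 1
      rw [hbv]
      congr 1
      ext z
      simp [hv, Fin.exists_fin_two, eq_comm]
      tauto
    rw [h1]
    rfl
  -- bases
  let bN : Module.Basis (Fin 2) ℤ ↥N := bspan.map (Submodule.comapSubtypeEquivOfLe hle).symm
  have hbN : ∀ i, ((bN i : ↥Λ) : ℂ) = v i := by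
    intro i
    rw [← hbspan i]
    rfl
  have hcard : Fintype.card (Module.Free.ChooseBasisIndex ℤ ↥Λ) = 2 := by
    rw [← Module.finrank_eq_card_chooseBasisIndex, ZLattice.rank ℝ Λ,
      Complex.finrank_real_complex]
  let bL : Module.Basis (Fin 2) ℤ ↥Λ :=
    (Module.Free.chooseBasis ℤ ↥Λ).reindex (Fintype.equivFinOfCardEq hcard)
  let b₀ : Module.Basis (Fin 2) ℝ ℂ := Module.Basis.ofZLatticeBasis ℝ Λ bL
  -- t = |d| where d is the ℤ-det
  set d : ℤ := bL.det (fun i => ((bN i : ↥Λ) : ↥Λ)) with hd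
  have htd : (t : ℤ) = |d| := by
    rw [← hNidx, index_eq_natAbs_det bL N bN, Int.abs_eq_natAbs]
  -- real det of v in b₀ equals d
  have hdet_cast : b₀.det v = (d : ℝ) := by
    have hmat : b₀.toMatrix v =
        (Int.castRingHom ℝ).mapMatrix (bL.toMatrix (fun i => ((bN i : ↥Λ)))) := by
      ext i j
      show b₀.repr (v j) i = ((bL.repr (bN j : ↥Λ) i : ℤ) : ℝ)
      rw [← hbN j]
      exact Module.Basis.ofZLatticeBasis_repr_apply ℝ Λ bL (bN j) i
    rw [Module.Basis.det_apply, hmat, ← RingHom.map_det, hd, Module.Basis.det_apply]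
    rfl
  -- covolume of Λ
  have hbLb₀ : (Subtype.val ∘ ⇑bL : Fin 2 → ℂ) = ⇑b₀ :=
    funext fun i => (Module.Basis.ofZLatticeBasis_apply ℝ Λ bL i).symm
  have hcovΛ : ZLattice.covolume Λ volume = (volume (ZSpan.fundamentalDomain b₀)).toReal := by
    rw [ZLattice.covolume_eq_det_mul_measureReal Λ volume bL b₀, measureReal_def, hbLb₀, Module.Basis.det_self]
    simp
  have hbspan' : (Subtype.val ∘ ⇑bspan : Fin 2 → ℂ) = v := funext hbspan
  -- covolume of Λ' two ways
  have hcov1 : ZLattice.covolume (Submodule.span ℤ (Set.range ⇑bv)) volume =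
      |b₀.det v| * ZLattice.covolume Λ volume := by
    rw [ZLattice.covolume_eq_det_mul_measureReal (Submodule.span ℤ (Set.range ⇑bv)) volume bspan b₀,
      hbspan', measureReal_def, hcovΛ]
  have hcov2 : ZLattice.covolume (Submodule.span ℤ (Set.range ⇑bv)) volume = Ωp * Ωm.im := by
    rw [ZLattice.covolume_eq_det_mul_measureReal (Submodule.span ℤ (Set.range ⇑bv)) volume bspan
      Complex.basisOneI, hbspan', measureReal_def, vol_fd_oneI]
    have h3 : Complex.basisOneI.det v = Ωp * Ωm.im := by
      rw [Module.Basis.det_apply, Matrix.det_fin_two]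
      simp [Module.Basis.toMatrix_apply, Complex.coe_basisOneI_repr, hv, hre]
    rw [h3, ENNReal.toReal_one, mul_one, abs_of_pos (by positivity)]
  rw [← hcov2, hcov1, hdet_cast]
  have : |(d:ℝ)| = (t : ℝ) := by
    rw_mod_cast [htd]
  rw [this]
end
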